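/- (Borch's theorem.) Let ρ be a convex risk measure on X, let γ_A, γ_B > 0 and γ_C = γ_A + γ_B, and let ρ_{γ_A}, ρ_{γ_B}, ρ_{γ_C} be the corresponding γ-tolerant risk measures. For any initial exposures X_A, X_B ∈ X, the optimal risk transfer problem satisfies inf_{F∈X} { ρ_{γ_A}(X_A − F) + ρ_{γ_B}(X_B + F) } = ρ_{γ_C}(X_A + X_B), and the infimum is attained at the proportional structure F* = (γ_B/γ_C)·X_A − (γ_A/γ_C)·X_B. -/

import Mathlib

open BoundedContinuousFunction

/-- A (monetary) convex risk measure on the space `Ω →ᵇ ℝ` of bounded functions on `Ω`. -/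
def IsConvexRiskMeasure {Ω : Type*} [TopologicalSpace Ω] (ρ : (Ω →ᵇ ℝ) → ℝ) : Prop :=
  (∀ (Φ Ψ : Ω →ᵇ ℝ) (l : ℝ), 0 ≤ l → l ≤ 1 →
      ρ (l • Φ + (1 - l) • Ψ) ≤ l * ρ Φ + (1 - l) * ρ Ψ) ∧
  (∀ Φ Ψ : Ω →ᵇ ℝ, (∀ ω, Φ ω ≤ Ψ ω) → ρ Ψ ≤ ρ Φ) ∧
  (∀ (Φ : Ω →ᵇ ℝ) (m : ℝ), ρ (Φ + BoundedContinuousFunction.const Ω m) = ρ Φ - m)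

/-- The `γ`-tolerant (dilated) risk measure `ρ_γ(Ψ) = γ ρ(Ψ/γ)`. -/
noncomputable def dilated {Ω : Type*} [TopologicalSpace Ω]
    (ρ : (Ω →ᵇ ℝ) → ℝ) (γ : ℝ) (Ψ : Ω →ᵇ ℝ) : ℝ :=
  γ * ρ (γ⁻¹ • Ψ)

/-- Borch's theorem: the optimal risk transfer between two agents with `γ`-tolerant
risk measures `ρ_{γ_A}` and `ρ_{γ_B}` satisfies
`inf_F { ρ_{γ_A}(X_A - F) + ρ_{γ_B}(X_B + F) } = ρ_{γ_A+γ_B}(X_A + X_B)`, the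
infimum being attained at the proportional structure
`F* = (γ_B/γ_C) X_A - (γ_A/γ_C) X_B`. -/
theorem stmt16 {Ω : Type*} [TopologicalSpace Ω] [DiscreteTopology Ω] [Nonempty Ω]
    (ρ : (Ω →ᵇ ℝ) → ℝ) (hρ : IsConvexRiskMeasure ρ)
    (γA γB : ℝ) (hγA : 0 < γA) (hγB : 0 < γB) (XA XB : Ω →ᵇ ℝ) :
    (⨅ F : Ω →ᵇ ℝ, (dilated ρ γA (XA - F) + dilated ρ γB (XB + F)))
        = dilated ρ (γA + γB) (XA + XB) ∧
    dilated ρ γA (XA - ((γB / (γA + γB)) • XA - (γA / (γA + γB)) • XB))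
      + dilated ρ γB (XB + ((γB / (γA + γB)) • XA - (γA / (γA + γB)) • XB))
        = dilated ρ (γA + γB) (XA + XB) := by

  obtain ⟨hconv, hmono, hcash⟩ := hρ
  have hγC : 0 < γA + γB := by linarith
  set γC := γA + γB with hγCdef
  have key : ∀ F : Ω →ᵇ ℝ,
      dilated ρ γC (XA + XB) ≤ dilated ρ γA (XA - F) + dilated ρ γB (XB + F) := by
    intro F
    have hl0 : (0:ℝ) ≤ γA / γC := by positivity
    have hl1 : γA / γC ≤ 1 := by rw [div_le_one hγC]; linarith
    have h := hconv (γA⁻¹ • (XA - F)) (γB⁻¹ • (XB + F)) (γA / γC) hl0 hl1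
    have h1 : (1 : ℝ) - γA / γC = γB / γC := by
      field_simp
      linarith
    have harg : (γA / γC) • (γA⁻¹ • (XA - F)) + (1 - γA / γC) • (γB⁻¹ • (XB + F))
        = γC⁻¹ • (XA + XB) := by
      rw [h1, smul_smul, smul_smul]
      have e1 : γA / γC * γA⁻¹ = γC⁻¹ := by field_simp
      have e2 : γB / γC * γB⁻¹ = γC⁻¹ := by field_simp
      rw [e1, e2, ← smul_add]
      congr 1
      abel
    rw [harg] at h
    have h2 : γC * ρ (γC⁻¹ • (XA + XB))
        ≤ γC * (γA / γC * ρ (γA⁻¹ • (XA - F)) + (1 - γA / γC) * ρ (γB⁻¹ • (XB + F))) :=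
      mul_le_mul_of_nonneg_left h hγC.le
    have h3 : γC * (γA / γC * ρ (γA⁻¹ • (XA - F)) + (1 - γA / γC) * ρ (γB⁻¹ • (XB + F)))
        = γA * ρ (γA⁻¹ • (XA - F)) + γB * ρ (γB⁻¹ • (XB + F)) := by
      rw [h1]
      field_simp
    rw [h3] at h2
    simpa [dilated] using h2
  have eA : γA⁻¹ • (XA - ((γB / γC) • XA - (γA / γC) • XB)) = γC⁻¹ • (XA + XB) := by
    ext ω
    simp only [BoundedContinuousFunction.coe_smul, BoundedContinuousFunction.coe_sub,
      BoundedContinuousFunction.coe_add, Pi.smul_apply, Pi.sub_apply, Pi.add_apply,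
      smul_eq_mul]
    field_simp
    ring
  have eB : γB⁻¹ • (XB + ((γB / γC) • XA - (γA / γC) • XB)) = γC⁻¹ • (XA + XB) := by
    ext ω
    simp only [BoundedContinuousFunction.coe_smul, BoundedContinuousFunction.coe_sub,
      BoundedContinuousFunction.coe_add, Pi.smul_apply, Pi.sub_apply, Pi.add_apply,
      smul_eq_mul]
    field_simp
    ring
  have hatt : dilated ρ γA (XA - ((γB / γC) • XA - (γA / γC) • XB))
      + dilated ρ γB (XB + ((γB / γC) • XA - (γA / γC) • XB))
        = dilated ρ γC (XA + XB) := by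
    simp only [dilated, eA, eB]
    ring
  refine ⟨le_antisymm ?_ (le_ciInf key), hatt⟩
  calc (⨅ F : Ω →ᵇ ℝ, (dilated ρ γA (XA - F) + dilated ρ γB (XB + F)))
      ≤ dilated ρ γA (XA - ((γB / γC) • XA - (γA / γC) • XB))
        + dilated ρ γB (XB + ((γB / γC) • XA - (γA / γC) • XB)) :=
        ciInf_le ⟨dilated ρ γC (XA + XB), by rintro x ⟨F, rfl⟩; exact key F⟩ _
    _ = dilated ρ γC (XA + XB) := hatt
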